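/- Let S be a commutative semiring with 0 and 1 such that distinct formal polynomials in one variable over S define distinct functions S → S. Then UT_2(S) satisfies no nontrivial semigroup identity: for every alphabet Σ and all distinct words u, v ∈ Σ⁺, there is a semigroup homomorphism φ : Σ⁺ → UT_2(S) with φ(u) ≠ φ(v). Consequently, for every n ≥ 2, neither UT_n(S) nor the multiplicative semigroup M_n(S) of all n×n matrices over S satisfies a nontrivial semigroup identity. -/

import Mathlib

open Polynomial

namespace NoIdentAux

variable {S : Type*} [CommSemiring S] {A : Type*}

/-- Encode a list of letters as a polynomial in two variables. -/
noncomputable def Q (code : A → ℕ) : List A → Polynomial (Polynomial S)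
  | [] => 0
  | a :: l => C (X ^ code a) + X * Q code l

lemma coeff_Q (code : A → ℕ) : ∀ (l : List A) (k : ℕ),
    (Q (S := S) code l).coeff k =
      if h : k < l.length then X ^ code (l.get ⟨k, h⟩) else 0
  | [], k => by simp [Q]
  | a :: l, 0 => by
      rw [Q, Polynomial.coeff_add, Polynomial.coeff_C_zero, Polynomial.mul_coeff_zero,
        Polynomial.coeff_X_zero, zero_mul, add_zero]
      simp
  | a :: l, (k + 1) => by
      have hC : (C (X ^ code a) : Polynomial (Polynomial S)).coeff (k + 1) = 0 := by
        rw [Polynomial.coeff_C]; simp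
      rw [Q, Polynomial.coeff_add, Polynomial.coeff_X_mul, coeff_Q code l k, hC, zero_add]
      simp [Nat.succ_lt_succ_iff]

lemma X_pow_ne_zero' [Nontrivial S] (m : ℕ) : (X : Polynomial S) ^ m ≠ 0 := by
  intro hX
  have := congrArg (fun p => p.coeff m) hX
  simp at this

lemma Q_inj [Nontrivial S] (code : A → ℕ) {l₁ l₂ : List A}
    (hc : ∀ a ∈ l₁, ∀ b ∈ l₂, code a = code b → a = b)
    (hQ : Q (S := S) code l₁ = Q code l₂) : l₁ = l₂ := by
  have key : ∀ k, (Q (S := S) code l₁).coeff k = (Q (S := S) code l₂).coeff k :=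
    fun k => by rw [hQ]
  have hlen : l₁.length = l₂.length := by
    by_contra hne
    rcases Nat.lt_or_ge l₁.length l₂.length with hlt | hge
    · have := key l₁.length
      rw [coeff_Q, coeff_Q, dif_neg (lt_irrefl _), dif_pos hlt] at this
      exact X_pow_ne_zero' _ this.symm
    · have hlt : l₂.length < l₁.length := lt_of_le_of_ne hge (fun e => hne e.symm)
      have := key l₂.length
      rw [coeff_Q, coeff_Q, dif_pos hlt, dif_neg (lt_irrefl _)] at this
      exact X_pow_ne_zero' _ this
  apply List.ext_get hlen
  intro k h1 h2
  have := key k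
  rw [coeff_Q, coeff_Q, dif_pos h1, dif_pos h2] at this
  have hcode : code (l₁.get ⟨k, h1⟩) = code (l₂.get ⟨k, h2⟩) := by
    have := congrArg natDegree this
    simpa using this
  exact hc _ (List.get_mem _ _) _ (List.get_mem _ _) hcode

/-- Matrix generators over the two-variable polynomial ring. -/
noncomputable def mats (code : A → ℕ) (a : A) :
    Matrix (Fin 2) (Fin 2) (Polynomial (Polynomial S)) :=
  !![X, C (X ^ code a); 0, 1]

lemma lift_mats (code : A → ℕ) (w : FreeSemigroup A) :
    FreeSemigroup.lift (mats (S := S) code) w =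
      !![X ^ (w.head :: w.tail).length, Q code (w.head :: w.tail); 0, 1] := by
  induction w using FreeSemigroup.recOnMul with
  | ih1 a =>
      rw [FreeSemigroup.lift_of]
      ext i j
      fin_cases i <;> fin_cases j <;> simp [mats, Q, FreeSemigroup.of]
  | ih2 a y _ hy =>
      rw [map_mul, FreeSemigroup.lift_of, hy]
      have hlist : (((FreeSemigroup.of a * y).head :: (FreeSemigroup.of a * y).tail) : List A)
          = a :: (y.head :: y.tail) := rfl
      rw [hlist]
      ext i j
      fin_cases i <;> fin_cases j <;>
        simp [mats, Q, Matrix.mul_apply, Fin.sum_univ_two, pow_succ] <;> ring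

lemma exists_eval_ne [Nontrivial S]
    (h : Function.Injective fun f : Polynomial S => fun x : S => Polynomial.eval x f)
    {p q : Polynomial (Polynomial S)} (hpq : p ≠ q) :
    ∃ e : Polynomial (Polynomial S) →+* S, e p ≠ e q := by
  obtain ⟨k, hk⟩ : ∃ k, p.coeff k ≠ q.coeff k := by
    by_contra h'
    push_neg at h'
    exact hpq (Polynomial.ext h')
  have h1 : (fun x : S => eval x (p.coeff k)) ≠ fun x : S => eval x (q.coeff k) :=
    fun e => hk (h e)
  obtain ⟨y, hy⟩ := Function.ne_iff.mp h1
  have h2 : p.map (evalRingHom y) ≠ q.map (evalRingHom y) := by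
    intro e
    apply hy
    have := congrArg (fun r => r.coeff k) e
    simpa [coeff_map] using this
  have h3 : (fun x : S => eval x (p.map (evalRingHom y)))
      ≠ fun x : S => eval x (q.map (evalRingHom y)) := fun e => h2 (h e)
  obtain ⟨x, hx⟩ := Function.ne_iff.mp h3
  exact ⟨(evalRingHom x).comp (mapRingHom (evalRingHom y)), by simpa using hx⟩

end NoIdentAux

/-- The submonoid of upper triangular `n × n` matrices over `S`. -/
def UT (n : ℕ) (S : Type*) [CommSemiring S] : Submonoid (Matrix (Fin n) (Fin n) S) where
  carrier := {A | ∀ i j : Fin n, j < i → A i j = 0}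
  one_mem' := fun i j hij => Matrix.one_apply_ne (ne_of_gt hij)
  mul_mem' := by
    intro a b ha hb i j hij
    rw [Matrix.mul_apply]
    apply Finset.sum_eq_zero
    intro k _
    rcases lt_or_ge k i with h | h
    · rw [ha i k h, zero_mul]
    · rw [hb k j (lt_of_lt_of_le hij h), mul_zero]

namespace NoIdentAux

lemma ut2_sep {S : Type*} [CommSemiring S] [Nontrivial S]
    (h : Function.Injective (fun f : Polynomial S => fun x : S => Polynomial.eval x f))
    (A : Type*) (u v : FreeSemigroup A) (huv : u ≠ v) :
    ∃ φ : FreeSemigroup A →ₙ* (UT 2 S), φ u ≠ φ v := by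
  classical
  have hl : (u.head :: u.tail : List A) ≠ v.head :: v.tail := by
    intro e
    apply huv
    injection e with e1 e2
    exact FreeSemigroup.ext e1 e2
  set L : List A := (u.head :: u.tail) ++ (v.head :: v.tail) with hL
  set code : A → ℕ := fun a => L.idxOf a with hcodedef
  have hcode : ∀ a ∈ (u.head :: u.tail : List A), ∀ b ∈ (v.head :: v.tail : List A),
      code a = code b → a = b := by
    intro a ha b hb hab
    exact (List.idxOf_inj (l := L) (by rw [hL]; exact List.mem_append_left _ ha)).mp hab
  have hQ : Q (S := S) code (u.head :: u.tail) ≠ Q code (v.head :: v.tail) :=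
    fun e => hl (Q_inj code hcode e)
  obtain ⟨ev, hev⟩ := exists_eval_ne h hQ
  have hmem : ∀ a : A, ((mats (S := S) code a).map ev) ∈ UT 2 S := by
    intro a i j hij
    fin_cases i <;> fin_cases j <;>
      first
      | exact absurd hij (by decide)
      | simp [mats, Matrix.map_apply]
  set ψ : FreeSemigroup A →ₙ* (UT 2 S) :=
    FreeSemigroup.lift (fun a => (⟨(mats (S := S) code a).map ev, hmem a⟩ : UT 2 S)) with hψ
  refine ⟨ψ, ?_⟩
  have hcoe : ∀ w : FreeSemigroup A,
      ((ψ w : UT 2 S) : Matrix (Fin 2) (Fin 2) S)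
        = (FreeSemigroup.lift (mats (S := S) code) w).map ev := by
    intro w
    induction w using FreeSemigroup.recOnMul with
    | ih1 a => rw [hψ, FreeSemigroup.lift_of, FreeSemigroup.lift_of]
    | ih2 a y ha hy =>
        rw [map_mul, map_mul, Submonoid.coe_mul, ha, hy, Matrix.map_mul]
  intro hne
  apply hev
  have h1 := hcoe u
  have h2 := hcoe v
  rw [hne, h2] at h1
  have h3 := congrArg (fun M => M 0 1) h1
  simp only [lift_mats, Matrix.map_apply] at h3
  simpa using h3.symm

variable {S : Type*} [CommSemiring S]

def e2 {n : ℕ} (hn : 2 ≤ n) : Fin 2 ⊕ Fin (n - 2) ≃ Fin n :=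
  finSumFinEquiv.trans (finCongr (by omega))

def emb {n : ℕ} (hn : 2 ≤ n) (M : Matrix (Fin 2) (Fin 2) S) : Matrix (Fin n) (Fin n) S :=
  (Matrix.fromBlocks M 0 0 0).submatrix (e2 hn).symm (e2 hn).symm

lemma emb_mul {n : ℕ} (hn : 2 ≤ n) (M N : Matrix (Fin 2) (Fin 2) S) :
    emb hn (M * N) = emb hn M * emb hn N := by
  rw [emb, emb, emb, Matrix.submatrix_mul_equiv, Matrix.fromBlocks_multiply]
  simp

lemma emb_apply_block {n : ℕ} (hn : 2 ≤ n) (M : Matrix (Fin 2) (Fin 2) S) (i j : Fin 2) :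
    emb hn M (e2 hn (Sum.inl i)) (e2 hn (Sum.inl j)) = M i j := by
  simp [emb]

lemma e2_inl_val {n : ℕ} (hn : 2 ≤ n) (i : Fin 2) : ((e2 hn) (Sum.inl i) : ℕ) = i := by
  simp [e2]

lemma emb_mem_UT {n : ℕ} (hn : 2 ≤ n) {M : Matrix (Fin 2) (Fin 2) S} (hM : M ∈ UT 2 S) :
    emb hn M ∈ UT n S := by
  intro i j hij
  rw [emb, Matrix.submatrix_apply]
  rcases h1 : (e2 hn).symm i with i' | i' <;> rcases h2 : (e2 hn).symm j with j' | j'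
  · apply hM
    apply_fun (e2 hn) at h1 h2
    rw [Equiv.apply_symm_apply] at h1 h2
    have hval : ((e2 hn) (Sum.inl j') : ℕ) < ((e2 hn) (Sum.inl i') : ℕ) := by
      rw [← h1, ← h2]; exact hij
    rw [e2_inl_val, e2_inl_val] at hval
    exact hval
  · simp
  · simp
  · simp

theorem utn_sep {S : Type*} [CommSemiring S] [Nontrivial S]
    (h : Function.Injective (fun f : Polynomial S => fun x : S => Polynomial.eval x f))
    {n : ℕ} (hn : 2 ≤ n)
    (A : Type*) (u v : FreeSemigroup A) (huv : u ≠ v) :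
    ∃ φ : FreeSemigroup A →ₙ* (UT n S), φ u ≠ φ v := by
  obtain ⟨ψ, hψ⟩ := ut2_sep h A u v huv
  refine ⟨⟨fun w => ⟨emb hn ((ψ w : UT 2 S) : Matrix (Fin 2) (Fin 2) S),
      emb_mem_UT hn (ψ w).2⟩, ?_⟩, ?_⟩
  · intro x y
    apply Subtype.ext
    show emb hn ((ψ (x * y) : UT 2 S) : Matrix (Fin 2) (Fin 2) S) = _
    rw [map_mul, Submonoid.coe_mul, emb_mul]
    rfl
  · intro hne
    apply hψ
    have he : emb hn ((ψ u : UT 2 S) : Matrix (Fin 2) (Fin 2) S)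
        = emb hn ((ψ v : UT 2 S) : Matrix (Fin 2) (Fin 2) S) := congrArg Subtype.val hne
    have hmat : ((ψ u : UT 2 S) : Matrix (Fin 2) (Fin 2) S)
        = ((ψ v : UT 2 S) : Matrix (Fin 2) (Fin 2) S) := by
      ext i j
      have := congrArg (fun M => M (e2 hn (Sum.inl i)) (e2 hn (Sum.inl j))) he
      simpa [emb_apply_block] using this
    exact Subtype.ext hmat

end NoIdentAux

/-- If distinct one-variable formal polynomials over `S` define distinct
functions `S → S`, then `UT_2(S)` satisfies no nontrivial semigroup identity, and hence for
every `n ≥ 2` neither does `UT_n(S)` nor the full matrix semigroup `M_n(S)`. -/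
theorem no_identity_of_separating_polynomials {S : Type*} [CommSemiring S] [Nontrivial S]
    (h : Function.Injective (fun f : Polynomial S => fun x : S => Polynomial.eval x f)) :
    (∀ (A : Type u) (x y : FreeSemigroup A), x ≠ y →
        ∃ φ : FreeSemigroup A →ₙ* (UT 2 S), φ x ≠ φ y) ∧
    (∀ n : ℕ, 2 ≤ n →
      (∀ (A : Type u) (x y : FreeSemigroup A), x ≠ y →
          ∃ φ : FreeSemigroup A →ₙ* (UT n S), φ x ≠ φ y) ∧
      (∀ (A : Type u) (x y : FreeSemigroup A), x ≠ y →
          ∃ φ : FreeSemigroup A →ₙ* Matrix (Fin n) (Fin n) S, φ x ≠ φ y)) := by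
  refine ⟨fun A x y hxy => NoIdentAux.ut2_sep h A x y hxy, fun n hn => ⟨?_, ?_⟩⟩
  · exact fun A x y hxy => NoIdentAux.utn_sep h hn A x y hxy
  · intro A x y hxy
    obtain ⟨ψ, hψ⟩ := NoIdentAux.utn_sep h hn A x y hxy
    exact ⟨((UT n S).subtype.toMulHom).comp ψ, fun e => hψ (Subtype.ext e)⟩
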